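/- arXiv:2503.23504 — 2 statements merged into one kernel-verified Lean document; each statement's English description precedes it below -/
import Mathlib

section
/- Let (X, f_{1,∞}) be a nonautonomous system with f_{1,∞} periodic of period k (f_{i+k} = f_i for all i), and K ⊆ X nonempty. Then for any finite open cover 𝒰 of X and any s > 0, the upper s-entropy of the k-th power system with respect to the cover 𝒰_1^k = ⋁_{j=0}^{k-1} f_1^{-j}(𝒰) satisfies h̄_K(f_{1,∞}^k, s, 𝒰_1^k) ≥ k^s · h̄_K(f_{1,∞}, s, 𝒰), and hence D̄_K(f_{1,∞}^k) = D̄_K(f_{1,∞}). -/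
open Filter Set Topology
open scoped ENNReal NNReal

noncomputable section

/-- `comps f i n` is the composition `f_i^n = f_{i+n-1} ∘ ⋯ ∘ f_i` (indices from 1). -/
def comps {X : Type*} (f : ℕ → X → X) (i : ℕ) : ℕ → X → X
  | 0 => id
  | n + 1 => f (i + n) ∘ comps f i n

/-- Minimal cardinality (in `ℕ∞`) of a subfamily of `U` covering `K`. -/
def coverNumOn {X : Type*} (K : Set X) (U : Set (Set X)) : ℕ∞ :=
  sInf {n : ℕ∞ | ∃ F ⊆ U, F.Finite ∧ (F.ncard : ℕ∞) = n ∧ K ⊆ ⋃₀ F}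

/-- `U` is a finite open cover of the whole space. -/
def IsFiniteOpenCover {X : Type*} [TopologicalSpace X] (U : Set (Set X)) : Prop :=
  U.Finite ∧ (∀ u ∈ U, IsOpen u) ∧ ⋃₀ U = Set.univ

/-- Dynamical join `⋁_{j=0}^{n-1} (f_i^j)⁻¹ 𝒰`. -/
def dynJoin {X : Type*} (f : ℕ → X → X) (i : ℕ) (U : Set (Set X)) (n : ℕ) : Set (Set X) :=
  {V | ∃ c : ℕ → Set X, (∀ j < n, c j ∈ U) ∧ V = ⋂ j ∈ Finset.range n, comps f i j ⁻¹' c j}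

/-- Upper `s`-entropy of the system started at time `i` w.r.t. the cover `U`, on `K`. -/
def hCover {X : Type*} (f : ℕ → X → X) (i : ℕ) (K : Set X) (U : Set (Set X)) (s : ℝ) : ℝ≥0∞ :=
  Filter.limsup (fun n : ℕ =>
    ENNReal.ofReal (Real.log ((coverNumOn K (dynJoin f i U n)).toNat)) / (n : ℝ≥0∞) ^ s)
    Filter.atTop

/-- Upper `s`-entropy: supremum over all finite open covers. -/
def hCoverSup {X : Type*} [TopologicalSpace X] (f : ℕ → X → X) (i : ℕ) (K : Set X) (s : ℝ) :
    ℝ≥0∞ :=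
  ⨆ U ∈ {U : Set (Set X) | IsFiniteOpenCover U}, hCover f i K U s

/-- Upper classical topological entropy dimension (cover version), in `ℝ≥0∞`. -/
def DbarCover {X : Type*} [TopologicalSpace X] (f : ℕ → X → X) (i : ℕ) (K : Set X) : ℝ≥0∞ :=
  sInf (ENNReal.ofReal '' {s : ℝ | 0 < s ∧ hCoverSup f i K s = 0})

section Metric
variable {X : Type*} [PseudoMetricSpace X]

/-- `E` is an `(n,ε)`-spanning set of `K`. -/
def IsSpanningSet (f : ℕ → X → X) (K : Set X) (n : ℕ) (ε : ℝ) (E : Set X) : Prop :=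
  ∀ y ∈ K, ∃ x ∈ E, ∀ j < n, dist (comps f 1 j y) (comps f 1 j x) ≤ ε

/-- `F` is an `(n,ε)`-separated subset of `K`. -/
def IsSepSet (f : ℕ → X → X) (K : Set X) (n : ℕ) (ε : ℝ) (F : Set X) : Prop :=
  F ⊆ K ∧ ∀ x ∈ F, ∀ y ∈ F, x ≠ y → ∃ j < n, ε < dist (comps f 1 j x) (comps f 1 j y)

/-- Minimal cardinality of an `(n,ε)`-spanning set of `K`. -/
def spanNum (f : ℕ → X → X) (K : Set X) (n : ℕ) (ε : ℝ) : ℕ :=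
  sInf {m : ℕ | ∃ E : Set X, E.Finite ∧ E.ncard = m ∧ IsSpanningSet f K n ε E}

/-- Maximal cardinality of an `(n,ε)`-separated subset of `K`. -/
def sepNum (f : ℕ → X → X) (K : Set X) (n : ℕ) (ε : ℝ) : ℕ :=
  sSup {m : ℕ | ∃ F : Set X, F.Finite ∧ F.ncard = m ∧ IsSepSet f K n ε F}

/-- Upper `s`-entropy via spanning sets. -/
def hSpan (f : ℕ → X → X) (K : Set X) (s : ℝ) : ℝ≥0∞ :=
  Filter.limsup (fun ε : ℝ =>
    Filter.limsup
      (fun n : ℕ => ENNReal.ofReal (Real.log (spanNum f K n ε : ℝ)) / (n : ℝ≥0∞) ^ s)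
      Filter.atTop) (𝓝[>] (0 : ℝ))

/-- Upper `s`-entropy via separated sets. -/
def hSep (f : ℕ → X → X) (K : Set X) (s : ℝ) : ℝ≥0∞ :=
  Filter.limsup (fun ε : ℝ =>
    Filter.limsup
      (fun n : ℕ => ENNReal.ofReal (Real.log (sepNum f K n ε : ℝ)) / (n : ℝ≥0∞) ^ s)
      Filter.atTop) (𝓝[>] (0 : ℝ))

/-- Lower `s`-entropy via separated sets. -/
def hSepLow (f : ℕ → X → X) (K : Set X) (s : ℝ) : ℝ≥0∞ :=
  Filter.limsup (fun ε : ℝ =>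
    Filter.liminf
      (fun n : ℕ => ENNReal.ofReal (Real.log (sepNum f K n ε : ℝ)) / (n : ℝ≥0∞) ^ s)
      Filter.atTop) (𝓝[>] (0 : ℝ))

/-- Upper entropy dimension (spanning-set version). -/
def DbarSpan (f : ℕ → X → X) (K : Set X) : ℝ≥0∞ :=
  sInf (ENNReal.ofReal '' {s : ℝ | 0 < s ∧ hSpan f K s = 0})

/-- Upper entropy dimension (separated-set version). -/
def DbarSep (f : ℕ → X → X) (K : Set X) : ℝ≥0∞ :=
  sInf (ENNReal.ofReal '' {s : ℝ | 0 < s ∧ hSep f K s = 0})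

/-- Lower entropy dimension (separated-set version). -/
def DlowSep (f : ℕ → X → X) (K : Set X) : ℝ≥0∞ :=
  sInf (ENNReal.ofReal '' {s : ℝ | 0 < s ∧ hSepLow f K s = 0})

/-- Diameter of a cover. -/
def covDiam (U : Set (Set X)) : ℝ≥0∞ := ⨆ u ∈ U, EMetric.diam u

end Metric

section Pesin
variable {X : Type*}

/-- The set `X(𝐔)` determined by a string `p = (m, c)`. -/
def stringSet (f : ℕ → X → X) (p : ℕ × (ℕ → Set X)) : Set X :=
  ⋂ j ∈ Finset.range p.1, comps f 1 j ⁻¹' p.2 j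

/-- `G` is a countable collection of strings over `U` of length `≥ N` covering `K`. -/
def IsStringCover (f : ℕ → X → X) (U : Set (Set X)) (K : Set X) (N : ℕ)
    (G : Set (ℕ × (ℕ → Set X))) : Prop :=
  G.Countable ∧ (∀ p ∈ G, N ≤ p.1 ∧ ∀ j < p.1, p.2 j ∈ U) ∧ K ⊆ ⋃ p ∈ G, stringSet f p

/-- The Carathéodory–Pesin pre-measure `M(f,K,s,𝒰,α,N)`. -/
def pesinM (f : ℕ → X → X) (K : Set X) (s : ℝ) (U : Set (Set X)) (α : ℝ) (N : ℕ) : ℝ≥0∞ :=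
  sInf {t : ℝ≥0∞ | ∃ G : Set (ℕ × (ℕ → Set X)), IsStringCover f U K N G ∧
    t = ∑' p : G, ENNReal.ofReal (Real.exp (-α * (p.1.1 : ℝ) ^ s))}

/-- The Carathéodory–Pesin outer measure `m(f,K,s,𝒰,α) = lim_{N→∞} M(f,K,s,𝒰,α,N)`. -/
def pesinOuter (f : ℕ → X → X) (K : Set X) (s : ℝ) (U : Set (Set X)) (α : ℝ) : ℝ≥0∞ :=
  ⨆ N : ℕ, pesinM f K s U α N

/-- Critical value `D(f,K,s,𝒰)` where `m(f,K,s,𝒰,·)` jumps from `∞` to `0`. -/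
def pesinCrit (f : ℕ → X → X) (K : Set X) (s : ℝ) (U : Set (Set X)) : EReal :=
  sInf ((fun α : ℝ => (α : EReal)) '' {α : ℝ | pesinOuter f K s U α = 0})

/-- The Pesin `s`-topological entropy `D(f,K,s)`. -/
def pesinEnt [TopologicalSpace X] (f : ℕ → X → X) (K : Set X) (s : ℝ) : EReal :=
  ⨆ U ∈ {U : Set (Set X) | IsFiniteOpenCover U}, pesinCrit f K s U

/-- The Pesin topological entropy dimension `D(f,K)`. -/
def pesinDim [TopologicalSpace X] (f : ℕ → X → X) (K : Set X) : ℝ≥0∞ :=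
  sInf (ENNReal.ofReal '' {s : ℝ | 0 < s ∧ pesinEnt f K s = 0})

end Pesin

end

section PowerRuleHelpers

open Filter

variable {X : Type*}

private lemma comps_add' (f : ℕ → X → X) (i a b : ℕ) :
    comps f i (a + b) = comps f (i + a) b ∘ comps f i a := by
  induction b with
  | zero => rfl
  | succ b ih =>
    show f (i + (a + b)) ∘ comps f i (a + b) = _
    rw [ih, show i + (a + b) = i + a + b by omega]
    rfl

private lemma coverNumOn_le_of_refine {K : Set X} {V W : Set (Set X)}
    (h : ∀ v ∈ V, ∃ w ∈ W, v ⊆ w) : coverNumOn K W ≤ coverNumOn K V := by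
  classical
  apply le_sInf
  rintro t ⟨F, hFV, hFfin, rfl, hcov⟩
  choose φ hφW hφsub using h
  set ψ : Set X → Set X := fun v => if hv : v ∈ V then φ v hv else ∅ with hψ
  have hsub : ∀ v ∈ F, v ⊆ ψ v := by
    intro v hv
    simp only [hψ, dif_pos (hFV hv)]
    exact hφsub v (hFV hv)
  have hmem : ∀ v ∈ F, ψ v ∈ W := by
    intro v hv
    simp only [hψ, dif_pos (hFV hv)]
    exact hφW v (hFV hv)
  refine le_trans (sInf_le ⟨ψ '' F, ?_, hFfin.image ψ, rfl, ?_⟩) ?_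
  · rintro w ⟨v, hv, rfl⟩
    exact hmem v hv
  · intro x hx
    obtain ⟨v, hvF, hxv⟩ := hcov hx
    exact ⟨ψ v, Set.mem_image_of_mem ψ hvF, hsub v hvF hxv⟩
  · exact_mod_cast Set.ncard_image_le hFfin

private lemma one_le_coverNumOn {K : Set X} (hK : K.Nonempty) (W : Set (Set X)) :
    1 ≤ coverNumOn K W := by
  apply le_sInf
  rintro t ⟨F, hFW, hFfin, rfl, hcov⟩
  obtain ⟨x, hx⟩ := hK
  obtain ⟨v, hvF, -⟩ := hcov hx
  have : 0 < F.ncard := (Set.ncard_pos hFfin).2 ⟨v, hvF⟩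
  exact_mod_cast this

private lemma coverNumOn_le_ncard {K : Set X} {W : Set (Set X)} (hfin : W.Finite)
    (hcov : K ⊆ ⋃₀ W) : coverNumOn K W ≤ (W.ncard : ℕ∞) :=
  sInf_le ⟨W, subset_rfl, hfin, rfl, hcov⟩

private lemma ofReal_log_toNat_mono {a b : ℕ∞} (h1 : 1 ≤ a) (h : a ≤ b) (hb : b ≠ ⊤) :
    ENNReal.ofReal (Real.log a.toNat) ≤ ENNReal.ofReal (Real.log b.toNat) := by
  have ha : a ≠ ⊤ := by
    intro h'
    exact hb (top_le_iff.mp (h' ▸ h))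
  have h1' : 1 ≤ a.toNat := by
    have := ENat.toNat_le_toNat h1 ha
    simpa using this
  apply ENNReal.ofReal_le_ofReal
  apply Real.log_le_log (by exact_mod_cast Nat.lt_of_lt_of_le Nat.zero_lt_one h1')
  exact_mod_cast ENat.toNat_le_toNat h hb

private lemma iInter_range_eq_iInter_fin (S : ℕ → Set X) (n : ℕ) :
    ⋂ j ∈ Finset.range n, S j = ⋂ j : Fin n, S j.1 := by
  ext x
  simp only [Set.mem_iInter, Finset.mem_range]
  exact ⟨fun h j => h j.1 j.2, fun h j hj => h ⟨j, hj⟩⟩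

private lemma dynJoin_finite (f : ℕ → X → X) (i : ℕ) {U : Set (Set X)} (hU : U.Finite)
    (n : ℕ) : (dynJoin f i U n).Finite := by
  classical
  have hsub : dynJoin f i U n ⊆
      (fun d : Fin n → Set X => ⋂ j : Fin n, comps f i j.1 ⁻¹' d j) ''
        (Set.univ.pi fun _ : Fin n => U) := by
    rintro v ⟨c, hc, rfl⟩
    refine ⟨fun j => c j.1, fun j _ => hc j.1 j.2, ?_⟩
    exact (iInter_range_eq_iInter_fin (fun j => comps f i j ⁻¹' c j) n).symm
  exact ((Set.Finite.pi fun _ => hU).image _).subset hsub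

private lemma comps_continuous [TopologicalSpace X] {f : ℕ → X → X}
    (hf : ∀ i, Continuous (f i)) (i n : ℕ) : Continuous (comps f i n) := by
  induction n with
  | zero => exact continuous_id
  | succ n ih => exact (hf (i + n)).comp ih

private lemma dynJoin_covers (f : ℕ → X → X) (i : ℕ) {U : Set (Set X)}
    (hU : ⋃₀ U = Set.univ) (n : ℕ) : ⋃₀ dynJoin f i U n = Set.univ := by
  apply Set.eq_univ_of_forall
  intro x
  have hex : ∀ j : ℕ, ∃ u, u ∈ U ∧ comps f i j x ∈ u := by
    intro j
    have : comps f i j x ∈ ⋃₀ U := hU ▸ Set.mem_univ _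
    simpa [Set.mem_sUnion] using this
  choose c hcU hcx using hex
  refine ⟨⋂ j ∈ Finset.range n, comps f i j ⁻¹' c j, ⟨c, fun j _ => hcU j, rfl⟩, ?_⟩
  simp only [Set.mem_iInter, Set.mem_preimage]
  intro j _
  exact hcx j

private lemma dynJoin_isOpen [TopologicalSpace X] {f : ℕ → X → X}
    (hf : ∀ i, Continuous (f i)) {U : Set (Set X)} (hUo : ∀ u ∈ U, IsOpen u) (i n : ℕ) :
    ∀ v ∈ dynJoin f i U n, IsOpen v := by
  rintro v ⟨c, hc, rfl⟩
  refine isOpen_biInter_finset fun j hj => ?_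
  exact (hUo _ (hc j (Finset.mem_range.mp hj))).preimage (comps_continuous hf i j)

private lemma claim_trunc (f : ℕ → X → X) (i : ℕ) (U : Set (Set X)) {m m' : ℕ}
    (h : m ≤ m') : ∀ v ∈ dynJoin f i U m', ∃ w ∈ dynJoin f i U m, v ⊆ w := by
  rintro v ⟨c, hc, rfl⟩
  refine ⟨⋂ j ∈ Finset.range m, comps f i j ⁻¹' c j,
    ⟨c, fun j hj => hc j (lt_of_lt_of_le hj h), rfl⟩, ?_⟩
  intro x hx
  simp only [Set.mem_iInter, Set.mem_preimage, Finset.mem_range] at hx ⊢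
  exact fun j hj => hx j (lt_of_lt_of_le hj h)

section Periodic

variable {f : ℕ → X → X} {k : ℕ} {g : ℕ → X → X}

private lemma f_add_mul (hper : ∀ i, 1 ≤ i → f (i + k) = f i) :
    ∀ (j i : ℕ), 1 ≤ i → f (i + j * k) = f i := by
  intro j
  induction j with
  | zero => simp
  | succ j ih =>
    intro i hi
    rw [show i + (j + 1) * k = i + j * k + k by ring, hper _ (by omega), ih i hi]

private lemma comps_shift (hper : ∀ i, 1 ≤ i → f (i + k) = f i) (j : ℕ) :
    ∀ l, comps f (1 + j * k) l = comps f 1 l := by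
  intro l
  induction l with
  | zero => rfl
  | succ l ih =>
    show f (1 + j * k + l) ∘ comps f (1 + j * k) l = f (1 + l) ∘ comps f 1 l
    rw [ih, show 1 + j * k + l = 1 + l + j * k by ring, f_add_mul hper j (1 + l) (by omega)]

private lemma comps_mul_add (hper : ∀ i, 1 ≤ i → f (i + k) = f i) (j l : ℕ) :
    comps f 1 (j * k + l) = comps f 1 l ∘ comps f 1 (j * k) := by
  rw [comps_add' f 1 (j * k) l, comps_shift hper j]

private lemma comps_g_eq (hper : ∀ i, 1 ≤ i → f (i + k) = f i)
    (hg : ∀ j, g j = comps f ((j - 1) * k + 1) k) :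
    ∀ n, comps g 1 n = comps f 1 (n * k) := by
  intro n
  induction n with
  | zero => rw [Nat.zero_mul]; rfl
  | succ n ih =>
    show g (1 + n) ∘ comps g 1 n = comps f 1 ((n + 1) * k)
    have h1 : (1 + n - 1) * k + 1 = 1 + n * k := by
      rw [show 1 + n - 1 = n by omega, Nat.add_comm]
    rw [ih, hg (1 + n), h1, comps_shift hper n k, show (n + 1) * k = n * k + k by ring,
      comps_mul_add hper n k]

private lemma mul_add_lt_mul {j l n k : ℕ} (hj : j < n) (hl : l < k) :
    j * k + l < n * k := by
  have h2 : j * k + k ≤ n * k := by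
    calc j * k + k = (j + 1) * k := by ring
      _ ≤ n * k := Nat.mul_le_mul (Nat.succ_le_of_lt hj) (le_refl k)
  exact lt_of_lt_of_le (Nat.add_lt_add_left hl _) h2

private lemma claimI (hper : ∀ i, 1 ≤ i → f (i + k) = f i)
    (hg : ∀ j, g j = comps f ((j - 1) * k + 1) k) {U : Set (Set X)} (n : ℕ) :
    ∀ v ∈ dynJoin f 1 U (n * k), ∃ w ∈ dynJoin g 1 (dynJoin f 1 U k) n, v ⊆ w := by
  rintro v ⟨c, hc, rfl⟩
  refine ⟨⋂ j ∈ Finset.range n, comps g 1 j ⁻¹'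
      (⋂ l ∈ Finset.range k, comps f 1 l ⁻¹' c (j * k + l)),
    ⟨fun j => ⋂ l ∈ Finset.range k, comps f 1 l ⁻¹' c (j * k + l), fun j hj =>
      ⟨fun l => c (j * k + l), fun l hl => hc _ (mul_add_lt_mul hj hl), rfl⟩, rfl⟩, ?_⟩
  intro x hx
  simp only [Set.mem_iInter, Set.mem_preimage, Finset.mem_range] at hx ⊢
  intro j hj l hl
  have hcomp : comps f 1 l (comps g 1 j x) = comps f 1 (j * k + l) x := by
    rw [comps_g_eq hper hg j]
    exact (congrFun (comps_mul_add hper j l) x).symm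
  rw [hcomp]
  exact hx _ (mul_add_lt_mul hj hl)

private lemma claimII (hper : ∀ i, 1 ≤ i → f (i + k) = f i)
    (hg : ∀ j, g j = comps f ((j - 1) * k + 1) k) (hk : 1 ≤ k) {U : Set (Set X)} (n : ℕ) :
    ∀ w ∈ dynJoin g 1 (dynJoin f 1 U k) n, ∃ v ∈ dynJoin f 1 U (n * k), w ⊆ v := by
  classical
  rintro w ⟨d, hd, rfl⟩
  have hk0 : 0 < k := hk
  have hch : ∀ j : ℕ, ∃ cc : ℕ → Set X,
      j < n → (∀ l < k, cc l ∈ U) ∧ d j = ⋂ l ∈ Finset.range k, comps f 1 l ⁻¹' cc l := by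
    intro j
    by_cases hj : j < n
    · obtain ⟨cc, h1, h2⟩ := hd j hj
      exact ⟨cc, fun _ => ⟨h1, h2⟩⟩
    · exact ⟨fun _ => ∅, fun h => absurd h hj⟩
  choose C hC using hch
  refine ⟨⋂ m ∈ Finset.range (n * k), comps f 1 m ⁻¹' C (m / k) (m % k),
    ⟨fun m => C (m / k) (m % k), fun m hm =>
      (hC (m / k) ((Nat.div_lt_iff_lt_mul hk0).mpr hm)).1 _ (Nat.mod_lt _ hk0), rfl⟩, ?_⟩
  intro x hx
  simp only [Set.mem_iInter, Set.mem_preimage, Finset.mem_range] at hx ⊢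
  intro m hm
  have hjn : m / k < n := (Nat.div_lt_iff_lt_mul hk0).mpr hm
  have hlk : m % k < k := Nat.mod_lt _ hk0
  have hx' := hx (m / k) hjn
  rw [(hC (m / k) hjn).2] at hx'
  simp only [Set.mem_iInter, Set.mem_preimage, Finset.mem_range] at hx'
  have hmem := hx' (m % k) hlk
  have hcomp : comps f 1 (m % k) (comps g 1 (m / k) x) = comps f 1 m x := by
    rw [comps_g_eq hper hg]
    have h2 := (congrFun (comps_mul_add hper (m / k) (m % k)) x).symm
    rwa [Nat.div_add_mod' m k] at h2
  rwa [hcomp] at hmem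

private lemma claimIII (hper : ∀ i, 1 ≤ i → f (i + k) = f i)
    (hg : ∀ j, g j = comps f ((j - 1) * k + 1) k) (hk : 1 ≤ k) {V : Set (Set X)} (n : ℕ) :
    ∀ v ∈ dynJoin f 1 V (n * k), ∃ w ∈ dynJoin g 1 V n, v ⊆ w := by
  rintro v ⟨c, hc, rfl⟩
  have hk0 : 0 < k := hk
  have hlt : ∀ {j : ℕ}, j < n → j * k < n * k := fun {j} hj =>
    (Nat.mul_lt_mul_right hk0).mpr hj
  refine ⟨⋂ j ∈ Finset.range n, comps g 1 j ⁻¹' c (j * k),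
    ⟨fun j => c (j * k), fun j hj => hc _ (hlt hj), rfl⟩, ?_⟩
  intro x hx
  simp only [Set.mem_iInter, Set.mem_preimage, Finset.mem_range] at hx ⊢
  intro j hj
  have : comps g 1 j x = comps f 1 (j * k) x := congrFun (comps_g_eq hper hg j) x
  rw [this]
  exact hx _ (hlt hj)

end Periodic

private lemma limsup_comp_mul_le (u : ℕ → ℝ≥0∞) {k : ℕ} (hk : 1 ≤ k) :
    Filter.limsup (fun n => u (n * k)) Filter.atTop ≤ Filter.limsup u Filter.atTop := by
  have hv : Filter.Tendsto (fun n : ℕ => n * k) Filter.atTop Filter.atTop :=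
    Filter.tendsto_atTop_mono (fun n => Nat.le_mul_of_pos_right n hk) Filter.tendsto_id
  have heq : Filter.limsup (fun n => u (n * k)) Filter.atTop
      = Filter.limsSup (Filter.map u (Filter.map (fun n : ℕ => n * k) Filter.atTop)) := by
    rw [Filter.map_map]
    rfl
  rw [heq]
  exact Filter.limsSup_le_limsSup_of_le (Filter.map_mono hv)

private lemma rpow_natCast_ne_zero {n : ℕ} (hn : 1 ≤ n) {s : ℝ} (hs : 0 < s) :
    ((n : ℝ≥0∞)) ^ s ≠ 0 := by
  rw [Ne, ENNReal.rpow_eq_zero_iff_of_pos hs]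
  exact Nat.cast_ne_zero.mpr (by omega)

private lemma rpow_natCast_ne_top {n : ℕ} {s : ℝ} (hs : 0 < s) :
    ((n : ℝ≥0∞)) ^ s ≠ ⊤ :=
  ENNReal.rpow_ne_top_of_nonneg hs.le (ENNReal.natCast_ne_top n)

private lemma key_ineq (A : ℕ → ℝ≥0∞) (hmono : Monotone A) {k : ℕ} (hk : 1 ≤ k)
    {s : ℝ} (hs : 0 < s) :
    (k : ℝ≥0∞) ^ s * Filter.limsup (fun m : ℕ => A m / (m : ℝ≥0∞) ^ s) Filter.atTop ≤
      Filter.limsup (fun n : ℕ => A (n * k) / (n : ℝ≥0∞) ^ s) Filter.atTop := by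
  have hk0 : 0 < k := hk
  have hks0 : ((k : ℝ≥0∞)) ^ s ≠ 0 := rpow_natCast_ne_zero hk hs
  have hkstop : ((k : ℝ≥0∞)) ^ s ≠ ⊤ := rpow_natCast_ne_top hs
  refine le_of_forall_gt_imp_ge_of_dense fun c hc => ?_
  by_cases hctop : c = ⊤
  · simp [hctop]
  obtain ⟨c', hc1, hc2⟩ := exists_between hc
  have hc'0 : c' ≠ 0 := (lt_of_le_of_lt zero_le hc1).ne'
  have hc'top : c' ≠ ⊤ := ne_top_of_lt hc2
  obtain ⟨N₀, hN₀⟩ := Filter.eventually_atTop.mp (Filter.eventually_lt_of_limsup_lt hc1)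
  have ht : 1 < c / c' := by
    rw [ENNReal.lt_div_iff_mul_lt (Or.inl hc'0) (Or.inr one_ne_zero), one_mul]
    exact hc2
  have htend : Filter.Tendsto (fun m : ℕ => (((m : ℝ≥0∞) + k) / m) ^ s)
      Filter.atTop (𝓝 1) := by
    have h3 : Filter.Tendsto (fun m : ℕ => ((m : ℝ≥0∞))⁻¹) Filter.atTop (𝓝 0) := by
      simpa using ENNReal.tendsto_inv_iff.2 ENNReal.tendsto_nat_nhds_top
    have h2 : Filter.Tendsto (fun m : ℕ => (k : ℝ≥0∞) / m) Filter.atTop (𝓝 0) := by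
      simpa [div_eq_mul_inv] using
        ENNReal.Tendsto.const_mul h3 (Or.inr (ENNReal.natCast_ne_top k))
    have h1 : Filter.Tendsto (fun m : ℕ => ((m : ℝ≥0∞) + k) / m) Filter.atTop (𝓝 1) := by
      have hadd : Filter.Tendsto (fun m : ℕ => 1 + (k : ℝ≥0∞) / m) Filter.atTop (𝓝 1) := by
        simpa using Filter.Tendsto.const_add (1 : ℝ≥0∞) h2
      refine Filter.Tendsto.congr' ?_ hadd
      filter_upwards [Filter.eventually_ge_atTop 1] with m hm
      have hm0 : (m : ℝ≥0∞) ≠ 0 := Nat.cast_ne_zero.mpr (by omega)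
      rw [ENNReal.add_div, ENNReal.div_self hm0 (ENNReal.natCast_ne_top m)]
    have := ((ENNReal.continuous_rpow_const (y := s)).tendsto 1).comp h1
    simpa [ENNReal.one_rpow, Function.comp_def] using this
  obtain ⟨M, hM⟩ := Filter.eventually_atTop.mp (htend.eventually_lt_const ht)
  have hsuff : ∀ᶠ m : ℕ in Filter.atTop, A m / (m : ℝ≥0∞) ^ s ≤ c / (k : ℝ≥0∞) ^ s := by
    filter_upwards [Filter.eventually_ge_atTop (max (max 1 M) (N₀ * k))] with m hm
    have hm1 : 1 ≤ m := le_trans (le_trans (le_max_left 1 M) (le_max_left _ _)) hm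
    have hmM : M ≤ m := le_trans (le_trans (le_max_right 1 M) (le_max_left _ _)) hm
    have hmN : N₀ * k ≤ m := le_trans (le_max_right _ _) hm
    set n := m / k + 1 with hn
    have hnN : N₀ ≤ n := le_trans ((Nat.le_div_iff_mul_le hk0).mpr hmN) (Nat.le_succ _)
    have hmlt : m < n * k := (Nat.div_lt_iff_lt_mul hk0).mp (Nat.lt_succ_self (m / k))
    have hnkle : n * k ≤ m + k := by
      calc n * k = m / k * k + k := by rw [hn]; ring
        _ ≤ m + k := Nat.add_le_add_right (Nat.div_mul_le_self m k) k
    have hns0 : ((n : ℝ≥0∞)) ^ s ≠ 0 := rpow_natCast_ne_zero (Nat.le_add_left 1 _) hs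
    have hnstop : ((n : ℝ≥0∞)) ^ s ≠ ⊤ := rpow_natCast_ne_top hs
    have hA1 : A (n * k) ≤ c' * (n : ℝ≥0∞) ^ s :=
      ((ENNReal.div_lt_iff (Or.inl hns0) (Or.inl hnstop)).mp (hN₀ n hnN)).le
    have hA2 : A m ≤ c' * (n : ℝ≥0∞) ^ s := le_trans (hmono hmlt.le) hA1
    have hms0 : ((m : ℝ≥0∞)) ^ s ≠ 0 := rpow_natCast_ne_zero hm1 hs
    have hmstop : ((m : ℝ≥0∞)) ^ s ≠ ⊤ := rpow_natCast_ne_top hs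
    have hm0' : (m : ℝ≥0∞) ≠ 0 := Nat.cast_ne_zero.mpr (by omega)
    have hmtop' : (m : ℝ≥0∞) ≠ ⊤ := ENNReal.natCast_ne_top m
    have key : A m * (k : ℝ≥0∞) ^ s ≤ c * (m : ℝ≥0∞) ^ s := by
      have hle1 : ((n * k : ℕ) : ℝ≥0∞) ≤ ((m : ℝ≥0∞) + k) / m * m := by
        rw [ENNReal.div_mul_cancel hm0' hmtop']
        exact_mod_cast hnkle
      calc A m * (k : ℝ≥0∞) ^ s ≤ c' * (n : ℝ≥0∞) ^ s * (k : ℝ≥0∞) ^ s :=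
            mul_le_mul_left hA2 _
        _ = c' * ((n * k : ℕ) : ℝ≥0∞) ^ s := by
            rw [mul_assoc, ← ENNReal.mul_rpow_of_nonneg _ _ hs.le, Nat.cast_mul]
        _ ≤ c' * ((((m : ℝ≥0∞) + k) / m) ^ s * (m : ℝ≥0∞) ^ s) := by
            refine mul_le_mul_right ?_ c'
            rw [← ENNReal.mul_rpow_of_nonneg _ _ hs.le]
            exact ENNReal.rpow_le_rpow hle1 hs.le
        _ ≤ c' * (c / c' * (m : ℝ≥0∞) ^ s) :=
            mul_le_mul_right (mul_le_mul_left (hM m hmM).le _) c'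
        _ = c * (m : ℝ≥0∞) ^ s := by
            rw [← mul_assoc, ENNReal.mul_div_cancel hc'0 hc'top]
    rw [ENNReal.le_div_iff_mul_le (Or.inl hks0) (Or.inr hctop),
      div_eq_mul_inv, mul_right_comm, ← div_eq_mul_inv,
      ENNReal.div_le_iff_le_mul (Or.inl hms0) (Or.inl hmstop)]
    exact key
  have hL : Filter.limsup (fun m : ℕ => A m / (m : ℝ≥0∞) ^ s) Filter.atTop
      ≤ c / (k : ℝ≥0∞) ^ s := Filter.limsup_le_of_le (by isBoundedDefault) hsuff
  calc (k : ℝ≥0∞) ^ s * Filter.limsup (fun m : ℕ => A m / (m : ℝ≥0∞) ^ s) Filter.atTop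
      ≤ (k : ℝ≥0∞) ^ s * (c / (k : ℝ≥0∞) ^ s) := mul_le_mul_right hL _
    _ = c := ENNReal.mul_div_cancel hks0 hkstop

private lemma key_ineq2 (A B : ℕ → ℝ≥0∞) {k : ℕ} (hk : 1 ≤ k) {s : ℝ} (hs : 0 < s)
    (hAB : ∀ n, 1 ≤ n → B n ≤ A (n * k)) :
    Filter.limsup (fun n : ℕ => B n / (n : ℝ≥0∞) ^ s) Filter.atTop ≤
      (k : ℝ≥0∞) ^ s * Filter.limsup (fun m : ℕ => A m / (m : ℝ≥0∞) ^ s) Filter.atTop := by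
  have hks0 : ((k : ℝ≥0∞)) ^ s ≠ 0 := rpow_natCast_ne_zero hk hs
  have hkstop : ((k : ℝ≥0∞)) ^ s ≠ ⊤ := rpow_natCast_ne_top hs
  have step1 : Filter.limsup (fun n : ℕ => B n / (n : ℝ≥0∞) ^ s) Filter.atTop ≤
      Filter.limsup
        (fun n : ℕ => (k : ℝ≥0∞) ^ s * (A (n * k) / ((n * k : ℕ) : ℝ≥0∞) ^ s))
        Filter.atTop := by
    refine Filter.limsup_le_limsup ?_
    filter_upwards [Filter.eventually_ge_atTop 1] with n hn
    have hns0 : ((n : ℝ≥0∞)) ^ s ≠ 0 := rpow_natCast_ne_zero hn hs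
    have hnstop : ((n : ℝ≥0∞)) ^ s ≠ ⊤ := rpow_natCast_ne_top hs
    have heq : (k : ℝ≥0∞) ^ s * (A (n * k) / ((n * k : ℕ) : ℝ≥0∞) ^ s)
        = A (n * k) / (n : ℝ≥0∞) ^ s := by
      rw [Nat.cast_mul, ENNReal.mul_rpow_of_nonneg _ _ hs.le, div_eq_mul_inv,
        ENNReal.mul_inv (Or.inl hns0) (Or.inl hnstop), div_eq_mul_inv]
      calc (k : ℝ≥0∞) ^ s * (A (n * k) * (((n : ℝ≥0∞) ^ s)⁻¹ * (((k : ℝ≥0∞)) ^ s)⁻¹))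
          = (k : ℝ≥0∞) ^ s * (((k : ℝ≥0∞)) ^ s)⁻¹ * (A (n * k) * ((n : ℝ≥0∞) ^ s)⁻¹) := by
            ring
        _ = A (n * k) * ((n : ℝ≥0∞) ^ s)⁻¹ := by
            rw [ENNReal.mul_inv_cancel hks0 hkstop, one_mul]
    rw [heq]
    exact ENNReal.div_le_div_right (hAB n hn) _
  calc Filter.limsup (fun n : ℕ => B n / (n : ℝ≥0∞) ^ s) Filter.atTop
      ≤ _ := step1
    _ = (k : ℝ≥0∞) ^ s *
        Filter.limsup (fun n : ℕ => A (n * k) / ((n * k : ℕ) : ℝ≥0∞) ^ s) Filter.atTop :=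
        ENNReal.limsup_const_mul_of_ne_top hkstop
    _ ≤ (k : ℝ≥0∞) ^ s *
        Filter.limsup (fun m : ℕ => A m / (m : ℝ≥0∞) ^ s) Filter.atTop :=
        mul_le_mul_right (limsup_comp_mul_le (fun m : ℕ => A m / (m : ℝ≥0∞) ^ s) hk) _

end PowerRuleHelpers

/-- Power rule for periodic systems: the reverse cover inequality and `D̄ₖ(f^k) = D̄ₖ(f)`. -/
theorem power_rule_periodic {X : Type*} [TopologicalSpace X] [CompactSpace X] (f : ℕ → X → X)
    (hf : ∀ i, Continuous (f i)) (k : ℕ) (hk : 1 ≤ k)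
    (hper : ∀ i, 1 ≤ i → f (i + k) = f i) (K : Set X) (hK : K.Nonempty)
    (g : ℕ → X → X) (hg : ∀ j, g j = comps f ((j - 1) * k + 1) k)
    (U : Set (Set X)) (hU : IsFiniteOpenCover U) :
    (∀ s : ℝ, 0 < s →
        (k : ℝ≥0∞) ^ s * hCover f 1 K U s ≤ hCover g 1 K (dynJoin f 1 U k) s) ∧
      DbarCover g 1 K = DbarCover f 1 K := by
  classical
  have hcovK : ∀ {V : Set (Set X)}, IsFiniteOpenCover V → ∀ n, K ⊆ ⋃₀ dynJoin f 1 V n := by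
    intro V hV n
    rw [dynJoin_covers f 1 hV.2.2 n]
    exact Set.subset_univ K
  have hAtop : ∀ {V : Set (Set X)}, IsFiniteOpenCover V → ∀ m,
      coverNumOn K (dynJoin f 1 V m) ≠ ⊤ := by
    intro V hV m
    exact ne_top_of_le_ne_top (ENat.coe_ne_top _)
      (coverNumOn_le_ncard (dynJoin_finite f 1 hV.1 m) (hcovK hV m))
  have hAmono : ∀ {V : Set (Set X)}, IsFiniteOpenCover V → Monotone (fun m : ℕ =>
      ENNReal.ofReal (Real.log ((coverNumOn K (dynJoin f 1 V m)).toNat))) := by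
    intro V hV m m' hmm'
    exact ofReal_log_toNat_mono (one_le_coverNumOn hK _)
      (coverNumOn_le_of_refine (claim_trunc f 1 V hmm')) (hAtop hV m')
  have part1 : ∀ V : Set (Set X), IsFiniteOpenCover V → ∀ s : ℝ, 0 < s →
      (k : ℝ≥0∞) ^ s * hCover f 1 K V s ≤ hCover g 1 K (dynJoin f 1 V k) s := by
    intro V hV s hs
    have hNeq : ∀ n, coverNumOn K (dynJoin g 1 (dynJoin f 1 V k) n)
        = coverNumOn K (dynJoin f 1 V (n * k)) := fun n =>
      le_antisymm (coverNumOn_le_of_refine (claimI hper hg n))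
        (coverNumOn_le_of_refine (claimII hper hg hk n))
    have hfun : hCover g 1 K (dynJoin f 1 V k) s
        = Filter.limsup (fun n : ℕ =>
            ENNReal.ofReal (Real.log ((coverNumOn K (dynJoin f 1 V (n * k))).toNat))
              / (n : ℝ≥0∞) ^ s) Filter.atTop := by
      unfold hCover
      congr 1
      funext n
      rw [hNeq n]
    rw [hfun]
    exact key_ineq (fun m : ℕ =>
      ENNReal.ofReal (Real.log ((coverNumOn K (dynJoin f 1 V m)).toNat)))
      (hAmono hV) hk hs
  have hsup_f_to_g : ∀ s : ℝ, 0 < s → hCoverSup f 1 K s = 0 → hCoverSup g 1 K s = 0 := by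
    intro s hs h0
    refine le_antisymm ?_ zero_le
    refine iSup₂_le fun V hV => ?_
    have hBA : ∀ n : ℕ, 1 ≤ n →
        ENNReal.ofReal (Real.log ((coverNumOn K (dynJoin g 1 V n)).toNat)) ≤
        ENNReal.ofReal (Real.log ((coverNumOn K (dynJoin f 1 V (n * k))).toNat)) := by
      intro n _
      exact ofReal_log_toNat_mono (one_le_coverNumOn hK _)
        (coverNumOn_le_of_refine (claimIII hper hg hk n)) (hAtop hV (n * k))
    have h1 : hCover g 1 K V s ≤ (k : ℝ≥0∞) ^ s * hCover f 1 K V s :=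
      key_ineq2 _ _ hk hs hBA
    have h2 : hCover f 1 K V s ≤ hCoverSup f 1 K s := by
      unfold hCoverSup
      exact le_biSup (fun W => hCover f 1 K W s) hV
    calc hCover g 1 K V s ≤ (k : ℝ≥0∞) ^ s * hCover f 1 K V s := h1
      _ ≤ (k : ℝ≥0∞) ^ s * hCoverSup f 1 K s := mul_le_mul_right h2 _
      _ = 0 := by rw [h0, mul_zero]
  have hsup_g_to_f : ∀ s : ℝ, 0 < s → hCoverSup g 1 K s = 0 → hCoverSup f 1 K s = 0 := by
    intro s hs h0
    refine le_antisymm (iSup₂_le fun V hV => ?_) zero_le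
    have hVc : IsFiniteOpenCover V := hV
    have hV' : IsFiniteOpenCover (dynJoin f 1 V k) :=
      ⟨dynJoin_finite f 1 hVc.1 k, dynJoin_isOpen hf hVc.2.1 1 k,
        dynJoin_covers f 1 hVc.2.2 k⟩
    have h1 := part1 V hVc s hs
    have h2 : hCover g 1 K (dynJoin f 1 V k) s ≤ hCoverSup g 1 K s := by
      unfold hCoverSup
      exact le_biSup (fun W => hCover g 1 K W s)
        (show dynJoin f 1 V k ∈ {U : Set (Set X) | IsFiniteOpenCover U} from hV')
    have h3 : (k : ℝ≥0∞) ^ s * hCover f 1 K V s = 0 :=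
      le_antisymm (h1.trans (h2.trans_eq h0)) zero_le
    have hks0 : ((k : ℝ≥0∞)) ^ s ≠ 0 := rpow_natCast_ne_zero hk hs
    exact le_of_eq ((mul_eq_zero.mp h3).resolve_left hks0)
  refine ⟨fun s hs => part1 U hU s hs, ?_⟩
  have hset : {s : ℝ | 0 < s ∧ hCoverSup g 1 K s = 0}
      = {s : ℝ | 0 < s ∧ hCoverSup f 1 K s = 0} :=
    Set.ext fun s => and_congr_right fun hs => ⟨hsup_g_to_f s hs, hsup_f_to_g s hs⟩
  unfold DbarCover
  rw [hset]
end

section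
/- Let (X,d), (Y,ρ) be compact metric spaces with nonautonomous systems (X, f_{1,∞}) and (Y, g_{1,∞}), and let π_{1,∞} be an equicontinuous sequence of continuous surjections π_i : X → Y satisfying π_{i+1} ∘ f_i = g_i ∘ π_i for all i ≥ 1. Then for every nonempty K ⊆ X and every s > 0, the Pesin s-entropies satisfy D(g_{1,∞}, π_1(K), s) ≤ D(f_{1,∞}, K, s), and hence D(g_{1,∞}, π_1(K)) ≤ D(f_{1,∞}, K). -/
open Filter Set Topology
open scoped ENNReal NNReal

section Aux

private lemma comps_semi {X Y : Type*} (f : ℕ → X → X) (g : ℕ → Y → Y) (π : ℕ → X → Y)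
    (hsemi : ∀ i, 1 ≤ i → (π (i + 1)) ∘ f i = g i ∘ π i) :
    ∀ n, π (1 + n) ∘ comps f 1 n = comps g 1 n ∘ π 1 := by
  intro n
  induction n with
  | zero => rfl
  | succ n ih =>
    show π (1 + (n + 1)) ∘ (f (1 + n) ∘ comps f 1 n) = (g (1 + n) ∘ comps g 1 n) ∘ π 1
    have h1 : (1 : ℕ) + (n + 1) = (1 + n) + 1 := by ring
    calc π (1 + (n + 1)) ∘ (f (1 + n) ∘ comps f 1 n)
        = (π ((1 + n) + 1) ∘ f (1 + n)) ∘ comps f 1 n := by rw [h1]; rfl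
      _ = (g (1 + n) ∘ π (1 + n)) ∘ comps f 1 n := by rw [hsemi (1 + n) (by omega)]
      _ = g (1 + n) ∘ (π (1 + n) ∘ comps f 1 n) := rfl
      _ = g (1 + n) ∘ (comps g 1 n ∘ π 1) := by rw [ih]
      _ = (g (1 + n) ∘ comps g 1 n) ∘ π 1 := rfl

set_option maxHeartbeats 1000000 in
private lemma pesinM_le_aux {X Y : Type*} (f : ℕ → X → X) (g : ℕ → Y → Y) (π : ℕ → X → Y)
    (hsemi : ∀ n, π (1 + n) ∘ comps f 1 n = comps g 1 n ∘ π 1)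
    (U : Set (Set Y)) (V : Set (Set X))
    (hVU : ∀ v ∈ V, ∀ j : ℕ, ∃ u ∈ U, π (1 + j) '' v ⊆ u)
    (K : Set X) (s α : ℝ) (N : ℕ) :
    pesinM g (π 1 '' K) s U α N ≤ pesinM f K s V α N := by
  refine le_sInf ?_
  rintro t ⟨G, ⟨hGc, hGstr, hGcov⟩, rfl⟩
  classical
  -- selection of elements of `U` containing images of elements of `V`
  set sel : Set X → ℕ → Set Y := fun v j =>
    if h : ∃ u ∈ U, π (1 + j) '' v ⊆ u then h.choose else ∅ with hsel
  have hsel_mem : ∀ v ∈ V, ∀ j : ℕ, sel v j ∈ U ∧ π (1 + j) '' v ⊆ sel v j := by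
    intro v hv j
    have h := hVU v hv j
    simp only [hsel, dif_pos h]
    exact ⟨h.choose_spec.1, h.choose_spec.2⟩
  set φ : ℕ × (ℕ → Set X) → ℕ × (ℕ → Set Y) := fun p => (p.1, fun j => sel (p.2 j) j) with hφ
  have hcov : IsStringCover g U (π 1 '' K) N (φ '' G) := by
    refine ⟨hGc.image φ, ?_, ?_⟩
    · rintro q ⟨p, hp, rfl⟩
      refine ⟨(hGstr p hp).1, fun j hj => ?_⟩
      exact (hsel_mem (p.2 j) ((hGstr p hp).2 j hj) j).1
    · rintro y ⟨x, hx, rfl⟩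
      have := hGcov hx
      rw [Set.mem_iUnion₂] at this
      obtain ⟨p, hp, hxp⟩ := this
      rw [Set.mem_iUnion₂]
      refine ⟨φ p, Set.mem_image_of_mem φ hp, ?_⟩
      simp only [stringSet, Set.mem_iInter, Finset.mem_range, Set.mem_preimage] at hxp ⊢
      intro j hj
      have h1 : comps f 1 j x ∈ p.2 j := hxp j hj
      have h2 : comps g 1 j (π 1 x) = π (1 + j) (comps f 1 j x) :=
        (congrFun (hsemi j) x).symm
      rw [h2]
      exact (hsel_mem (p.2 j) ((hGstr p hp).2 j hj) j).2 (Set.mem_image_of_mem _ h1)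
  refine le_trans (sInf_le ⟨φ '' G, hcov, rfl⟩) ?_
  have hsurj : Function.Surjective (fun p : G => (⟨φ p.1, Set.mem_image_of_mem φ p.2⟩ : φ '' G)) := by
    rintro ⟨q, p, hp, rfl⟩
    exact ⟨⟨p, hp⟩, rfl⟩
  exact ENNReal.tsum_le_tsum_comp_of_surjective hsurj
    (fun q : φ '' G => ENNReal.ofReal (Real.exp (-α * (q.1.1 : ℝ) ^ s)))

set_option maxHeartbeats 1000000 in
private lemma pesinCrit_nonneg {X : Type*} (f : ℕ → X → X) {K : Set X} (hK : K.Nonempty)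
    (s : ℝ) (U : Set (Set X)) : (0 : EReal) ≤ pesinCrit f K s U := by
  refine le_sInf ?_
  rintro x ⟨α, hα, rfl⟩
  rw [Set.mem_setOf_eq] at hα
  rw [EReal.coe_nonneg]
  by_contra h
  push_neg at h
  have h1 : (1 : ℝ≥0∞) ≤ pesinM f K s U α 0 := by
    refine le_sInf ?_
    rintro t ⟨G, ⟨hGc, hGstr, hGcov⟩, rfl⟩
    obtain ⟨x₀, hx₀⟩ := hK
    have hx := hGcov hx₀
    rw [Set.mem_iUnion₂] at hx
    obtain ⟨p, hp, -⟩ := hx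
    have hterm : (1 : ℝ≥0∞) ≤ ENNReal.ofReal (Real.exp (-α * (p.1 : ℝ) ^ s)) := by
      rw [ENNReal.one_le_ofReal]
      exact Real.one_le_exp (mul_nonneg (by linarith) (Real.rpow_nonneg (Nat.cast_nonneg _) _))
    refine hterm.trans ?_
    exact ENNReal.summable.le_tsum (⟨p, hp⟩ : G) (fun _ _ => zero_le)
  have h2 : (1 : ℝ≥0∞) ≤ pesinOuter f K s U α := h1.trans (le_iSup (pesinM f K s U α) 0)
  rw [hα] at h2
  simp at h2

end Aux

/-- Equisemiconjugacy decreases the Pesin `s`-entropy and the Pesin entropy dimension. -/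
theorem pesin_equisemiconjugacy {X Y : Type*} [MetricSpace X] [CompactSpace X]
    [MetricSpace Y] [CompactSpace Y]
    (f : ℕ → X → X) (hf : ∀ i, Continuous (f i))
    (g : ℕ → Y → Y) (hg : ∀ i, Continuous (g i))
    (π : ℕ → X → Y) (hπc : ∀ i, Continuous (π i)) (hπs : ∀ i, Function.Surjective (π i))
    (hequi : ∀ ε : ℝ, 0 < ε → ∃ δ : ℝ, 0 < δ ∧ ∀ i, 1 ≤ i → ∀ x y : X,
      dist x y < δ → dist (π i x) (π i y) < ε)
    (hsemi : ∀ i, 1 ≤ i → (π (i + 1)) ∘ f i = g i ∘ π i)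
    (K : Set X) (hK : K.Nonempty) :
    (∀ s : ℝ, 0 < s → pesinEnt g (π 1 '' K) s ≤ pesinEnt f K s) ∧
      pesinDim g (π 1 '' K) ≤ pesinDim f K := by
  have hsemi' : ∀ n, π (1 + n) ∘ comps f 1 n = comps g 1 n ∘ π 1 := comps_semi f g π hsemi
  have key : ∀ s : ℝ, pesinEnt g (π 1 '' K) s ≤ pesinEnt f K s := by
    intro s
    refine iSup₂_le fun U hU => ?_
    obtain ⟨ε, hε, hleb⟩ :=
      lebesgue_number_lemma_of_metric_sUnion isCompact_univ hU.2.1 hU.2.2.symm.subset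
    obtain ⟨δ, hδ, hδε⟩ := hequi ε hε
    obtain ⟨t, ht⟩ := isCompact_univ.elim_finite_subcover
      (fun x : X => Metric.ball x (δ / 2)) (fun x => Metric.isOpen_ball)
      (fun x _ => Set.mem_iUnion.2 ⟨x, Metric.mem_ball_self (by linarith)⟩)
    set V : Set (Set X) := (fun x => Metric.ball x (δ / 2)) '' ↑t with hVdef
    have hV : IsFiniteOpenCover V := by
      refine ⟨t.finite_toSet.image _, ?_, ?_⟩
      · rintro v ⟨x, -, rfl⟩; exact Metric.isOpen_ball
      · apply Set.eq_univ_of_univ_subset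
        rw [hVdef, Set.sUnion_image]
        exact ht
    have hVU : ∀ v ∈ V, ∀ j : ℕ, ∃ u ∈ U, π (1 + j) '' v ⊆ u := by
      rintro v ⟨x, -, rfl⟩ j
      obtain ⟨u, hu, hball⟩ := hleb (π (1 + j) x) (Set.mem_univ _)
      refine ⟨u, hu, ?_⟩
      rintro _ ⟨y, hy, rfl⟩
      apply hball
      rw [Metric.mem_ball] at hy ⊢
      exact hδε (1 + j) (by omega) y x (by linarith)
    have hMM : ∀ α : ℝ, ∀ N : ℕ, pesinM g (π 1 '' K) s U α N ≤ pesinM f K s V α N :=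
      fun α N => pesinM_le_aux f g π hsemi' U V hVU K s α N
    have hsub : {α : ℝ | pesinOuter f K s V α = 0} ⊆
        {α : ℝ | pesinOuter g (π 1 '' K) s U α = 0} := by
      intro α hα
      rw [Set.mem_setOf_eq] at hα ⊢
      have hmono : pesinOuter g (π 1 '' K) s U α ≤ pesinOuter f K s V α :=
        iSup_mono fun N => hMM α N
      exact le_antisymm (hmono.trans_eq hα) zero_le
    calc pesinCrit g (π 1 '' K) s U ≤ pesinCrit f K s V :=
          sInf_le_sInf (Set.image_mono hsub)
      _ ≤ pesinEnt f K s := le_iSup₂_of_le V hV le_rfl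
  have hne : (π 1 '' K).Nonempty := hK.image _
  have hcovY : IsFiniteOpenCover ({Set.univ} : Set (Set Y)) := by
    refine ⟨Set.finite_singleton _, ?_, by simp⟩
    rintro u hu
    rw [Set.mem_singleton_iff] at hu
    rw [hu]; exact isOpen_univ
  have hnonneg : ∀ s : ℝ, (0 : EReal) ≤ pesinEnt g (π 1 '' K) s := by
    intro s
    calc (0 : EReal) ≤ pesinCrit g (π 1 '' K) s {Set.univ} := pesinCrit_nonneg g hne s _
      _ ≤ pesinEnt g (π 1 '' K) s := le_iSup₂_of_le {Set.univ} hcovY le_rfl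
  refine ⟨fun s _ => key s, ?_⟩
  apply sInf_le_sInf
  apply Set.image_mono
  rintro s ⟨hs, hf0⟩
  exact ⟨hs, le_antisymm ((key s).trans hf0.le) (hnonneg s)⟩
end
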